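/- Sequential measurement (non-commutative union bound, quantitative version): Let ρ be a density operator and Π₁,…,Π_k orthogonal projectors. Writing Π'_i := I − Π_i, we have Tr(Π'_k Π'_{k−1} ⋯ Π'_1 ρ Π'_1 ⋯ Π'_{k−1} Π'_k) ≥ 1 − 4 Σ_{i=1}^k Tr(Π_i ρ). -/

import Mathlib

open Matrix Kronecker Complex ComplexOrder

noncomputable section

namespace QIT

open scoped Classical

variable {n : Type*} [Fintype n] [DecidableEq n]

/-- Square root of a positive semidefinite matrix (junk value `0` otherwise). -/
def msqrt (A : Matrix n n ℂ) : Matrix n n ℂ :=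
  if h : A.PosSemidef then
    (h.1.eigenvectorUnitary : Matrix n n ℂ) *
      Matrix.diagonal (((↑) : ℝ → ℂ) ∘ (Real.sqrt ·) ∘ h.1.eigenvalues) *
      (star h.1.eigenvectorUnitary : Matrix n n ℂ)
  else 0

/-- Fidelity `F(ρ,σ) = Tr √(√σ ρ √σ)`. -/
def fid (ρ σ : Matrix n n ℂ) : ℝ :=
  ((msqrt (msqrt σ * ρ * msqrt σ)).trace).re

/-- Purified distance `P(ρ,σ) = √(1 - F(ρ,σ)²)`. -/
def Pdist (ρ σ : Matrix n n ℂ) : ℝ := Real.sqrt (1 - fid ρ σ ^ 2)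

/-- A density operator: positive semidefinite with unit trace. -/
def IsDensity (ρ : Matrix n n ℂ) : Prop := ρ.PosSemidef ∧ ρ.trace = 1

/-- A test (POVM element): `0 ≤ Λ ≤ I`. -/
def IsTest (Λ : Matrix n n ℂ) : Prop := Λ.PosSemidef ∧ (1 - Λ).PosSemidef

/-- Smooth hypothesis testing divergence `D_H^ε(ρ‖σ)` (log base 2). -/
def DH (ε : ℝ) (ρ σ : Matrix n n ℂ) : ℝ :=
  sSup {x : ℝ | ∃ Λ : Matrix n n ℂ, IsTest Λ ∧ (Λ * ρ).trace.re ≥ 1 - ε ∧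
    x = Real.logb 2 (1 / (Λ * σ).trace.re)}

/-- Max-relative entropy `D_max(ρ‖σ)`. -/
def Dmax (ρ σ : Matrix n n ℂ) : ℝ :=
  sInf {l : ℝ | ((((2:ℝ) ^ l : ℝ) : ℂ) • σ - ρ).PosSemidef}

/-- Matrix logarithm (base 2) via the spectral decomposition. -/
def mlog (A : Matrix n n ℂ) : Matrix n n ℂ :=
  if h : A.IsHermitian then
    (h.eigenvectorUnitary : Matrix n n ℂ) *
      Matrix.diagonal (fun i => (Real.logb 2 (h.eigenvalues i) : ℂ)) *
      (h.eigenvectorUnitary : Matrix n n ℂ)ᴴ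
  else 0

/-- Quantum relative entropy `D(ρ‖σ) = Tr ρ (log ρ - log σ)` (log base 2). -/
def Drel (ρ σ : Matrix n n ℂ) : ℝ :=
  ((ρ * mlog ρ).trace - (ρ * mlog σ).trace).re

/-- Square root of the Moore–Penrose inverse, on the support. -/
def pinvSqrt (A : Matrix n n ℂ) : Matrix n n ℂ :=
  if h : A.IsHermitian then
    (h.eigenvectorUnitary : Matrix n n ℂ) *
      Matrix.diagonal (fun i =>
        ((if h.eigenvalues i = 0 then 0 else (Real.sqrt (h.eigenvalues i))⁻¹ : ℝ) : ℂ)) *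
      (h.eigenvectorUnitary : Matrix n n ℂ)ᴴ
  else 0

variable {m : Type*} [Fintype m] [DecidableEq m]

/-- Partial trace over the second tensor factor. -/
def ptraceSnd (ρ : Matrix (n × m) (n × m) ℂ) : Matrix n n ℂ :=
  Matrix.of fun i j => ∑ k, ρ (i, k) (j, k)

/-- Partial trace over the first tensor factor. -/
def ptraceFst (ρ : Matrix (n × m) (n × m) ℂ) : Matrix m m ℂ :=
  Matrix.of fun i j => ∑ k, ρ (k, i) (k, j)



open scoped InnerProductSpace

/-- Chain of products `(1 - Pe (m-1)) ⋯ (1 - Pe 0)`. -/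
def chainProd (Pe : ℕ → Matrix n n ℂ) : ℕ → Matrix n n ℂ
  | 0 => 1
  | (m+1) => (1 - Pe m) * chainProd Pe m

private lemma seq_key {E : Type*} [NormedAddCommGroup E] [InnerProductSpace ℂ E]
    (f : ℕ → E → E)
    (hsa : ∀ j x y, ⟪f j x, y⟫_ℂ = ⟪x, f j y⟫_ℂ)
    (hid : ∀ j x, f j (f j x) = f j x)
    (ψ : E) (k : ℕ) (g : ℕ → E) (hg0 : g 0 = ψ)
    (hgs : ∀ m, g (m+1) = g m - f m (g m)) :
    ‖ψ‖^2 - ‖g k‖^2 ≤ 4 * ∑ j ∈ Finset.range k, ‖f j ψ‖^2 := by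
  have key1 : ∀ m, RCLike.re ⟪g m, f m (g m)⟫_ℂ = ‖f m (g m)‖ ^ 2 := by
    intro m
    have h1 : ⟪g m, f m (g m)⟫_ℂ = ⟪f m (g m), f m (g m)⟫_ℂ := by
      conv_lhs => rw [← hid m (g m)]
      exact (hsa m (g m) (f m (g m))).symm
    rw [h1, ← inner_self_eq_norm_sq (𝕜 := ℂ)]
  have norms : ∀ m, ‖g (m+1)‖^2 = ‖g m‖^2 - ‖f m (g m)‖^2 := by
    intro m
    rw [hgs m, norm_sub_sq (𝕜 := ℂ), key1]
    ring
  have telescope : ∀ m, ‖ψ‖^2 - ‖g m‖^2 = ∑ j ∈ Finset.range m, ‖f j (g j)‖^2 := by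
    intro m
    induction m with
    | zero => simp [hg0]
    | succ m ih => rw [Finset.sum_range_succ, ← ih, norms]; ring
  have inv : ∀ m, (∑ j ∈ Finset.range m, ‖f j (g j)‖^2) + ‖ψ - g m‖^2 ≤
      2 * ∑ j ∈ Finset.range m, ‖f j ψ‖ * ‖f j (g j)‖ := by
    intro m
    induction m with
    | zero => simp [hg0]
    | succ m ih =>
      have hu : ψ - g (m+1) = (ψ - g m) + f m (g m) := by rw [hgs]; abel
      have hexp : ‖ψ - g (m+1)‖^2 = ‖ψ - g m‖^2 +
          2 * RCLike.re ⟪ψ - g m, f m (g m)⟫_ℂ + ‖f m (g m)‖^2 := by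
        rw [hu, norm_add_sq (𝕜 := ℂ)]
      have hre : RCLike.re ⟪ψ - g m, f m (g m)⟫_ℂ =
          RCLike.re ⟪f m ψ, f m (g m)⟫_ℂ - ‖f m (g m)‖^2 := by
        rw [inner_sub_left, map_sub, key1]
        have h2 : ⟪ψ, f m (g m)⟫_ℂ = ⟪f m ψ, f m (g m)⟫_ℂ := by
          conv_lhs => rw [← hid m (g m)]
          exact (hsa m ψ (f m (g m))).symm
        rw [h2]
      have hCS : RCLike.re ⟪f m ψ, f m (g m)⟫_ℂ ≤ ‖f m ψ‖ * ‖f m (g m)‖ := by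
        calc RCLike.re ⟪f m ψ, f m (g m)⟫_ℂ ≤ ‖(⟪f m ψ, f m (g m)⟫_ℂ)‖ := RCLike.re_le_norm _
          _ ≤ ‖f m ψ‖ * ‖f m (g m)‖ := norm_inner_le_norm _ _
      rw [Finset.sum_range_succ, Finset.sum_range_succ]
      linarith [hexp, hre, hCS, ih]
  set A := ∑ j ∈ Finset.range k, ‖f j (g j)‖^2 with hAdef
  set D := ∑ j ∈ Finset.range k, ‖f j ψ‖^2 with hDdef
  have hAnn : 0 ≤ A := Finset.sum_nonneg fun _ _ => sq_nonneg _
  have hDnn : 0 ≤ D := Finset.sum_nonneg fun _ _ => sq_nonneg _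
  have h1 : A ≤ 2 * ∑ j ∈ Finset.range k, ‖f j ψ‖ * ‖f j (g j)‖ := by
    have := inv k
    nlinarith [sq_nonneg ‖ψ - g k‖]
  have hCS2 : ∑ j ∈ Finset.range k, ‖f j ψ‖ * ‖f j (g j)‖ ≤ Real.sqrt D * Real.sqrt A :=
    Real.sum_mul_le_sqrt_mul_sqrt _ _ _
  have h2 : A ≤ 2 * (Real.sqrt D * Real.sqrt A) := by linarith
  have hfin : A ≤ 4 * D := by
    nlinarith [Real.sq_sqrt hAnn, Real.sq_sqrt hDnn, Real.sqrt_nonneg A, Real.sqrt_nonneg D,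
      sq_nonneg (Real.sqrt A - 2 * Real.sqrt D)]
  rw [telescope k]
  linarith

/-- Embed a matrix into Euclidean space (Frobenius/Hilbert–Schmidt structure). -/
def toE (A : Matrix n n ℂ) : EuclideanSpace ℂ (n × n) :=
  (WithLp.equiv 2 ((n × n) → ℂ)).symm fun p => A p.1 p.2

/-- Inverse of `toE`. -/
def fromE (x : EuclideanSpace ℂ (n × n)) : Matrix n n ℂ :=
  Matrix.of fun i j => x (i, j)

private lemma fromE_toE (A : Matrix n n ℂ) : fromE (toE A) = A := rfl

private lemma toE_fromE (x : EuclideanSpace ℂ (n × n)) : toE (fromE x) = x := by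
  ext p
  simp [toE, fromE]

private lemma toE_sub (A B : Matrix n n ℂ) : toE (A - B) = toE A - toE B := by
  ext p
  simp [toE]

private lemma inner_toE (A B : Matrix n n ℂ) : ⟪toE A, toE B⟫_ℂ = (Aᴴ * B).trace := by
  have h : ⟪toE A, toE B⟫_ℂ = ∑ p : n × n, (starRingEnd ℂ) (A p.1 p.2) * B p.1 p.2 := by
    rw [PiLp.inner_apply]
    exact Finset.sum_congr rfl fun p _ => by simp [toE, mul_comm]
  rw [h, Matrix.trace]
  rw [Fintype.sum_prod_type]
  rw [Finset.sum_comm]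
  apply Finset.sum_congr rfl
  intro i _
  rw [Matrix.diag_apply, Matrix.mul_apply]
  apply Finset.sum_congr rfl
  intro j _
  rw [Matrix.conjTranspose_apply]
  ring_nf
  rw [mul_comm]
  rfl

private lemma norm_toE_sq (A : Matrix n n ℂ) : ‖toE A‖^2 = ((Aᴴ * A).trace).re := by
  rw [← inner_self_eq_norm_sq (𝕜 := ℂ), inner_toE]
  rfl

/-- sequential measurement (non-commutative union bound). -/
theorem statement5 {n : Type*} [Fintype n] [DecidableEq n] (k : ℕ)
    (P : Fin k → Matrix n n ℂ) (hP : ∀ i, (P i).IsHermitian ∧ P i * P i = P i)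
    (ρ : Matrix n n ℂ) (hρ : IsDensity ρ) :
    1 - 4 * ∑ i, (P i * ρ).trace.re ≤
      (((List.ofFn fun i => (1 : Matrix n n ℂ) - P i).reverse.prod * ρ *
        ((List.ofFn fun i => (1 : Matrix n n ℂ) - P i).reverse.prod)ᴴ).trace).re := by
  obtain ⟨hpsd, htr⟩ := hρ
  obtain ⟨s, hss, hsH⟩ : ∃ s : Matrix n n ℂ, s * s = ρ ∧ sᴴ = s := by
    open MatrixOrder in
    exact ⟨CFC.sqrt ρ, CFC.sqrt_mul_sqrt_self ρ hpsd.nonneg, (CFC.sqrt_nonneg ρ).posSemidef.1⟩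
  set Pe : ℕ → Matrix n n ℂ := fun j => if h : j < k then P ⟨j, h⟩ else 0 with hPedef
  have hPeH : ∀ j, (Pe j)ᴴ = Pe j := by
    intro j
    by_cases h : j < k
    · simp only [hPedef, dif_pos h]
      exact (hP ⟨j, h⟩).1
    · simp [hPedef, dif_neg h]
  have hPeP : ∀ j, Pe j * Pe j = Pe j := by
    intro j
    by_cases h : j < k
    · simp only [hPedef, dif_pos h]
      exact (hP ⟨j, h⟩).2
    · simp [hPedef, dif_neg h]
  have hsa : ∀ j x y, ⟪(fun j x => toE (Pe j * fromE x)) j x, y⟫_ℂ =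
      ⟪x, (fun j x => toE (Pe j * fromE x)) j y⟫_ℂ := by
    intro j x y
    simp only
    conv_lhs => rw [← toE_fromE y]
    conv_rhs => rw [← toE_fromE x]
    rw [inner_toE, inner_toE, Matrix.conjTranspose_mul, hPeH, Matrix.mul_assoc]
  have hid : ∀ j x, (fun j x => toE (Pe j * fromE x)) j ((fun j x => toE (Pe j * fromE x)) j x)
      = (fun j x => toE (Pe j * fromE x)) j x := by
    intro j x
    simp only
    rw [fromE_toE, ← Matrix.mul_assoc, hPeP]
  have hg0 : (fun m => toE (chainProd Pe m * s)) 0 = toE s := by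
    simp only [chainProd, Matrix.one_mul]
  have hgs : ∀ m, (fun m => toE (chainProd Pe m * s)) (m+1) =
      (fun m => toE (chainProd Pe m * s)) m -
        (fun j x => toE (Pe j * fromE x)) m ((fun m => toE (chainProd Pe m * s)) m) := by
    intro m
    simp only
    rw [fromE_toE, ← toE_sub]
    simp only [chainProd]
    rw [Matrix.sub_mul, Matrix.sub_mul, Matrix.one_mul, Matrix.mul_assoc]
  have main := seq_key (fun j x => toE (Pe j * fromE x)) hsa hid (toE s) k
    (fun m => toE (chainProd Pe m * s)) hg0 hgs
  have hψ : ‖toE s‖^2 = 1 := by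
    rw [norm_toE_sq, hsH, hss, htr, Complex.one_re]
  have hsum : ∑ j ∈ Finset.range k, ‖toE (Pe j * fromE (toE s))‖^2 =
      ∑ i : Fin k, ((P i * ρ).trace).re := by
    rw [← Fin.sum_univ_eq_sum_range (fun j => ‖toE (Pe j * fromE (toE s))‖^2) k]
    apply Finset.sum_congr rfl
    intro i _
    have hPi : Pe i.1 = P i := by
      simp only [hPedef, dif_pos i.2]
    rw [fromE_toE, norm_toE_sq, hPi, Matrix.conjTranspose_mul, hsH, (hP i).1]
    have e1 : (s * P i) * (P i * s) = s * (P i * s) := by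
      rw [Matrix.mul_assoc, ← Matrix.mul_assoc (P i), (hP i).2]
    rw [e1]
    congr 1
    rw [Matrix.trace_mul_comm, Matrix.mul_assoc, hss]
  -- identify the chain product with the reversed list product
  have hlist : (List.ofFn fun i : Fin k => (1 : Matrix n n ℂ) - P i) =
      (List.range k).map (fun j => 1 - Pe j) := by
    apply List.ext_getElem
    · simp
    · intro i h1 h2
      have hi : i < k := by simpa using h1
      simp [hPedef, dif_pos hi]
  have hrev : ∀ m, ((List.range m).map (fun j => (1 : Matrix n n ℂ) - Pe j)).reverse.prod =
      chainProd Pe m := by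
    intro m
    induction m with
    | zero => simp [chainProd]
    | succ m ih =>
      rw [List.range_succ, List.map_append, List.reverse_append]
      simp [ih, chainProd]
  have hchain : chainProd Pe k = (List.ofFn fun i => (1 : Matrix n n ℂ) - P i).reverse.prod := by
    rw [hlist, hrev]
  set L := (List.ofFn fun i => (1 : Matrix n n ℂ) - P i).reverse.prod with hLdef
  have hnormk : ‖toE (chainProd Pe k * s)‖^2 = ((L * ρ * Lᴴ).trace).re := by
    rw [hchain, norm_toE_sq, Matrix.conjTranspose_mul, hsH]
    congr 1
    rw [Matrix.trace_mul_comm]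
    congr 1
    rw [Matrix.mul_assoc L s, ← Matrix.mul_assoc s s, hss, ← Matrix.mul_assoc]
  rw [hψ, hsum, hnormk] at main
  linarith

end QIT
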